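/- The residual vector from the full regression equals the residual vector from the partial regression: (I - H)Y = (I - H̃2)(I - H1)Y, where H = X(X'X)^{-1}X', H1 = X1(X1'X1)^{-1}X1', X̃2 = (I-H1)X2, and H̃2 = X̃2(X̃2'X̃2)^{-1}X̃2'. -/

import Mathlib

open Matrix

theorem stmt_6 {n K L : ℕ}
    (X1 : Matrix (Fin n) (Fin K) ℝ) (X2 : Matrix (Fin n) (Fin L) ℝ) (Y : Fin n → ℝ)
    (X : Matrix (Fin n) (Fin K ⊕ Fin L) ℝ) (hX : X = Matrix.fromCols X1 X2)
    (H : Matrix (Fin n) (Fin n) ℝ) (hH : H = X * (Xᵀ * X)⁻¹ * Xᵀ)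
    (H1 : Matrix (Fin n) (Fin n) ℝ) (hH1 : H1 = X1 * (X1ᵀ * X1)⁻¹ * X1ᵀ)
    (X2t : Matrix (Fin n) (Fin L) ℝ) (hX2t : X2t = (1 - H1) * X2)
    (H2t : Matrix (Fin n) (Fin n) ℝ) (hH2t : H2t = X2t * (X2tᵀ * X2t)⁻¹ * X2tᵀ)
    (hGX : IsUnit (Xᵀ * X)) (hG1 : IsUnit (X1ᵀ * X1)) (hG2 : IsUnit (X2tᵀ * X2t)) :
    (1 - H) *ᵥ Y = (1 - H2t) *ᵥ ((1 - H1) *ᵥ Y) := by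
  have dX := (Matrix.isUnit_iff_isUnit_det _).mp hGX
  have d1 := (Matrix.isUnit_iff_isUnit_det _).mp hG1
  have d2 := (Matrix.isUnit_iff_isUnit_det _).mp hG2
  have iX : (Xᵀ * X)⁻¹ * (Xᵀ * X) = 1 := Matrix.nonsing_inv_mul _ dX
  have i1 : (X1ᵀ * X1)⁻¹ * (X1ᵀ * X1) = 1 := Matrix.nonsing_inv_mul _ d1
  have i2 : (X2tᵀ * X2t)⁻¹ * (X2tᵀ * X2t) = 1 := Matrix.nonsing_inv_mul _ d2
  -- symmetry of the inverses
  have s1 : ((X1ᵀ * X1)⁻¹)ᵀ = (X1ᵀ * X1)⁻¹ := by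
    rw [Matrix.transpose_nonsing_inv]; congr 1; simp [Matrix.transpose_mul]
  have sX : ((Xᵀ * X)⁻¹)ᵀ = (Xᵀ * X)⁻¹ := by
    rw [Matrix.transpose_nonsing_inv]; congr 1; simp [Matrix.transpose_mul]
  have s2 : ((X2tᵀ * X2t)⁻¹)ᵀ = (X2tᵀ * X2t)⁻¹ := by
    rw [Matrix.transpose_nonsing_inv]; congr 1; simp [Matrix.transpose_mul]
  -- symmetry of projectors
  have hH1sym : H1ᵀ = H1 := by
    rw [hH1]; simp [Matrix.transpose_mul, s1, Matrix.mul_assoc]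
  have hHsym : Hᵀ = H := by
    rw [hH]; simp [Matrix.transpose_mul, sX, Matrix.mul_assoc]
  have hH2sym : H2tᵀ = H2t := by
    rw [hH2t]; simp [Matrix.transpose_mul, s2, Matrix.mul_assoc]
  -- projection facts
  have hH1X1 : H1 * X1 = X1 := by
    rw [hH1, Matrix.mul_assoc, Matrix.mul_assoc, i1, Matrix.mul_one]
  have hHX : H * X = X := by
    rw [hH, Matrix.mul_assoc, Matrix.mul_assoc, iX, Matrix.mul_one]
  have hH2X2t : H2t * X2t = X2t := by
    rw [hH2t, Matrix.mul_assoc, Matrix.mul_assoc, i2, Matrix.mul_one]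
  -- componentwise H * X = X
  have hcols : H * Matrix.fromCols X1 X2 = Matrix.fromCols X1 X2 := by rw [← hX, hHX]
  rw [Matrix.mul_fromCols, Matrix.fromCols_ext_iff] at hcols
  obtain ⟨hHX1, hHX2⟩ := hcols
  -- H1 idempotent
  have hX1tH1 : X1ᵀ * H1 = X1ᵀ := by
    have := congrArg Matrix.transpose hH1X1
    simpa [Matrix.transpose_mul, hH1sym] using this
  have hH1idem : H1 * H1 = H1 := by
    nth_rewrite 1 [hH1]
    rw [Matrix.mul_assoc, hX1tH1, ← hH1]
  -- H1 * X2t = 0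
  have hH1X2t : H1 * X2t = 0 := by
    rw [hX2t, ← Matrix.mul_assoc, Matrix.mul_sub, Matrix.mul_one, hH1idem, sub_self,
      Matrix.zero_mul]
  -- H2t * H1 = 0
  have hX2tH1 : X2tᵀ * H1 = 0 := by
    have := congrArg Matrix.transpose hH1X2t
    simpa [Matrix.transpose_mul, hH1sym] using this
  have hH2tH1 : H2t * H1 = 0 := by
    rw [hH2t, Matrix.mul_assoc, hX2tH1, Matrix.mul_zero]
  -- H * H1 = H1, H * X2t = X2t, H * H2t = H2t
  have hHH1 : H * H1 = H1 := by
    rw [hH1, ← Matrix.mul_assoc, ← Matrix.mul_assoc, hHX1]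
  have hHX2t : H * X2t = X2t := by
    rw [hX2t, ← Matrix.mul_assoc, Matrix.mul_sub, Matrix.mul_one, Matrix.sub_mul,
      Matrix.sub_mul, Matrix.one_mul, hHX2, hHH1]
  have hHH2t : H * H2t = H2t := by
    rw [hH2t, ← Matrix.mul_assoc, ← Matrix.mul_assoc, hHX2t]
  -- P := H1 + H2t
  have hHP : H * (H1 + H2t) = H1 + H2t := by rw [Matrix.mul_add, hHH1, hHH2t]
  have hPH : (H1 + H2t) * H = H1 + H2t := by
    have := congrArg Matrix.transpose hHP
    simpa [Matrix.transpose_mul, Matrix.transpose_add, hHsym, hH1sym, hH2sym] using this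
  -- P * X = X
  have hPX1 : (H1 + H2t) * X1 = X1 := by
    have h2X1 : H2t * X1 = 0 := by
      have hX2tX1 : X2tᵀ * X1 = 0 := by
        rw [hX2t, Matrix.transpose_mul, Matrix.mul_assoc, Matrix.transpose_sub,
          Matrix.transpose_one, hH1sym, Matrix.sub_mul, Matrix.one_mul, hH1X1, sub_self,
          Matrix.mul_zero]
      rw [hH2t, Matrix.mul_assoc, hX2tX1, Matrix.mul_zero]
    rw [Matrix.add_mul, hH1X1, h2X1, add_zero]
  have hPX2 : (H1 + H2t) * X2 = X2 := by
    have hX2eq : X2 = X2t + H1 * X2 := by rw [hX2t, Matrix.sub_mul, Matrix.one_mul]; abel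
    have h2X2 : H2t * X2 = X2t := by
      conv_lhs => rw [hX2eq]
      rw [Matrix.mul_add, hH2X2t, ← Matrix.mul_assoc, hH2tH1, Matrix.zero_mul, add_zero]
    rw [Matrix.add_mul, h2X2, hX2t, Matrix.sub_mul, Matrix.one_mul]; abel
  have hPX : (H1 + H2t) * X = X := by
    rw [hX, Matrix.mul_fromCols, hPX1, hPX2]
  -- P * H = H
  have hPH' : (H1 + H2t) * H = H := by
    rw [hH, ← Matrix.mul_assoc, ← Matrix.mul_assoc, hPX]
  have hHeq : H = H1 + H2t := by rw [← hPH', hPH]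
  -- conclude
  rw [Matrix.mulVec_mulVec]
  rw [hHeq, Matrix.mul_sub, Matrix.mul_one, Matrix.sub_mul, Matrix.one_mul, hH2tH1, sub_zero]
  abel
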